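/- Let H be a bialgebra over a field k of characteristic 0, and let V be a Yetter-Drinfel'd module over H, i.e., V is a left H-module and a left H-comodule (with coaction ρ(v) = Σ v_{−1} ⊗ v₀) satisfying Σ x₁ v_{−1} ⊗ x₂·v₀ = Σ (x₁·v)_{−1} x₂ ⊗ (x₁·v)₀ for all x ∈ H, v ∈ V. Let α : V → V be a linear map that is simultaneously a morphism of H-modules and of H-comodules. Then the map B : V⊗V → V⊗V defined by B(v⊗w) = Σ v_{−1}·w ⊗ v₀ commutes with α⊗α and satisfies the Hom-Yang-Baxter equation (α⊗B)∘(B⊗α)∘(α⊗B) = (B⊗α)∘(α⊗B)∘(B⊗α). -/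
import Mathlib

set_option linter.unusedSectionVars false
set_option linter.unusedVariables false
set_option maxHeartbeats 1000000


open TensorProduct

section YD

variable {k H V : Type*} [Field k] [CharZero k] [Ring H] [Bialgebra k H]
  [AddCommGroup V] [Module k V] [Module H V]
  [IsScalarTower k H V] [SMulCommClass k H V]

/-- The `H`-action on `V` as a `k`-bilinear map. -/
noncomputable def actHom (k H V : Type*) [CommRing k] [Ring H] [Bialgebra k H]
    [AddCommGroup V] [Module k V] [Module H V]
    [IsScalarTower k H V] [SMulCommClass k H V] : H →ₗ[k] V →ₗ[k] V :=
  LinearMap.mk₂ k (fun x v => x • v)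
    (fun x y v => add_smul x y v)
    (fun c x v => smul_assoc c x v)
    (fun x v w => smul_add x v w)
    (fun c x v => smul_comm x c v)

/-- The `H`-action on `V` as a linear map `H ⊗ V → V`. -/
noncomputable def act2 (k H V : Type*) [CommRing k] [Ring H] [Bialgebra k H]
    [AddCommGroup V] [Module k V] [Module H V]
    [IsScalarTower k H V] [SMulCommClass k H V] : H ⊗[k] V →ₗ[k] V :=
  TensorProduct.lift (actHom k H V)

/-- The operator `B(v ⊗ w) = Σ v₍₋₁₎ • w ⊗ v₍₀₎` associated to a coaction `ρ`. -/
noncomputable def ydB (ρ : V →ₗ[k] H ⊗[k] V) : V ⊗[k] V →ₗ[k] V ⊗[k] V :=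
  TensorProduct.map (act2 k H V) LinearMap.id ∘ₗ
    (TensorProduct.assoc k H V V).symm.toLinearMap ∘ₗ
    TensorProduct.map LinearMap.id (TensorProduct.comm k V V).toLinearMap ∘ₗ
    (TensorProduct.assoc k H V V).toLinearMap ∘ₗ
    TensorProduct.map ρ LinearMap.id

/-- The operator `α ⊗ B` on `(V ⊗ V) ⊗ V` obtained via the associator. -/
noncomputable def leftTwist {k V : Type*} [CommRing k] [AddCommGroup V] [Module k V]
    (α : V →ₗ[k] V) (B : V ⊗[k] V →ₗ[k] V ⊗[k] V) :
    (V ⊗[k] V) ⊗[k] V →ₗ[k] (V ⊗[k] V) ⊗[k] V :=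
  (TensorProduct.assoc k V V V).symm.toLinearMap ∘ₗ
    TensorProduct.map α B ∘ₗ (TensorProduct.assoc k V V V).toLinearMap

noncomputable def Gm (k H V : Type*) [CommRing k] [Ring H] [Bialgebra k H]
    [AddCommGroup V] [Module k V] [Module H V]
    [IsScalarTower k H V] [SMulCommClass k H V] :
    (H ⊗[k] V) ⊗[k] V →ₗ[k] V ⊗[k] V :=
  TensorProduct.map (act2 k H V) LinearMap.id ∘ₗ
    (TensorProduct.assoc k H V V).symm.toLinearMap ∘ₗ
    TensorProduct.map LinearMap.id (TensorProduct.comm k V V).toLinearMap ∘ₗ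
    (TensorProduct.assoc k H V V).toLinearMap

lemma act2_tmul (h : H) (x : V) : act2 k H V (h ⊗ₜ[k] x) = h • x := by
  simp [act2, actHom]

lemma Gm_tmul (h : H) (p c : V) : Gm k H V ((h ⊗ₜ[k] p) ⊗ₜ[k] c) = (h • c) ⊗ₜ[k] p := by
  simp [Gm, act2_tmul, assoc_symm_tmul]

lemma ydB_tmul (ρ : V →ₗ[k] H ⊗[k] V) (a b : V) :
    ydB ρ (a ⊗ₜ[k] b) = Gm k H V (ρ a ⊗ₜ[k] b) := by
  simp [ydB, Gm]

lemma leftTwist_tmul {k V : Type*} [CommRing k] [AddCommGroup V] [Module k V]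
    (α : V →ₗ[k] V) (B : V ⊗[k] V →ₗ[k] V ⊗[k] V) (a b c : V) :
    leftTwist α B ((a ⊗ₜ[k] b) ⊗ₜ[k] c)
      = (TensorProduct.assoc k V V V).symm (α a ⊗ₜ[k] B (b ⊗ₜ[k] c)) := by
  simp [leftTwist]

noncomputable def PsiM (k H V : Type*) [CommRing k] [Ring H] [Bialgebra k H]
    [AddCommGroup V] [Module k V] [Module H V]
    [IsScalarTower k H V] [SMulCommClass k H V]
    (w0 : V) (α : V →ₗ[k] V) : H ⊗[k] V →ₗ[k] V ⊗[k] V :=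
  TensorProduct.map ((actHom k H V).flip w0) α

lemma PsiM_tmul (w0 : V) (α : V →ₗ[k] V) (h : H) (x : V) :
    PsiM k H V w0 α (h ⊗ₜ[k] x) = (h • w0) ⊗ₜ[k] α x := by
  simp [PsiM, actHom]

noncomputable def insV (k H V : Type*) [CommRing k] [Ring H] [Bialgebra k H]
    [AddCommGroup V] [Module k V] [Module H V]
    [IsScalarTower k H V] [SMulCommClass k H V] (v : V) : H →ₗ[k] H ⊗[k] V :=
  (TensorProduct.mk k H V).flip v

lemma insV_apply (v : V) (x : H) : insV k H V v x = x ⊗ₜ[k] v := rfl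

noncomputable def PhiL (k H V : Type*) [CommRing k] [Ring H] [Bialgebra k H]
    [AddCommGroup V] [Module k V] [Module H V]
    [IsScalarTower k H V] [SMulCommClass k H V]
    (α : V →ₗ[k] V) (w : V) :
    (H ⊗[k] (H ⊗[k] V)) ⊗[k] (H ⊗[k] V) →ₗ[k] (V ⊗[k] V) ⊗[k] V :=
  (TensorProduct.assoc k V V V).symm.toLinearMap ∘ₗ
  TensorProduct.map
    (α ∘ₗ act2 k H V ∘ₗ TensorProduct.map LinearMap.id ((actHom k H V).flip w))
    (TensorProduct.map (act2 k H V ∘ₗ TensorProduct.map LinearMap.id α) LinearMap.id ∘ₗ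
      (TensorProduct.assoc k H V V).symm.toLinearMap ∘ₗ
      TensorProduct.map LinearMap.id (TensorProduct.comm k V V).toLinearMap ∘ₗ
      (TensorProduct.assoc k H V V).toLinearMap) ∘ₗ
  (TensorProduct.tensorTensorTensorComm k H (H ⊗[k] V) H V).toLinearMap

lemma PhiL_tmul (α : V →ₗ[k] V) (w : V) (x₁ g : H) (x₀ : V) (h : H) (p : V) :
    PhiL k H V α w ((x₁ ⊗ₜ[k] (g ⊗ₜ[k] x₀)) ⊗ₜ[k] (h ⊗ₜ[k] p))
      = (α (x₁ • h • w) ⊗ₜ[k] (g • α p)) ⊗ₜ[k] x₀ := by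
  simp [PhiL, act2_tmul, actHom, assoc_symm_tmul]

noncomputable def PhiR (k H V : Type*) [CommRing k] [Ring H] [Bialgebra k H]
    [AddCommGroup V] [Module k V] [Module H V]
    [IsScalarTower k H V] [SMulCommClass k H V]
    (α : V →ₗ[k] V) (v w : V) :
    H ⊗[k] (H ⊗[k] V) →ₗ[k] (V ⊗[k] V) ⊗[k] V :=
  (TensorProduct.assoc k V V V).symm.toLinearMap ∘ₗ
  TensorProduct.map (α ∘ₗ (actHom k H V).flip v)
    (TensorProduct.map ((actHom k H V).flip (α w)) LinearMap.id)

lemma PhiR_tmul (α : V →ₗ[k] V) (v w : V) (g e : H) (c : V) :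
    PhiR k H V α v w (g ⊗ₜ[k] (e ⊗ₜ[k] c))
      = (α (g • v) ⊗ₜ[k] (e • α w)) ⊗ₜ[k] c := by
  simp [PhiR, actHom, assoc_symm_tmul]

theorem stmt13 (ρ : V →ₗ[k] H ⊗[k] V)
    -- coassociativity of the coaction
    (hcoassoc : TensorProduct.map LinearMap.id ρ ∘ₗ ρ
      = (TensorProduct.assoc k H H V).toLinearMap ∘ₗ
          TensorProduct.map Coalgebra.comul LinearMap.id ∘ₗ ρ)
    -- counit axiom of the coaction
    (hcounit : (TensorProduct.lid k V).toLinearMap ∘ₗ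
        TensorProduct.map Coalgebra.counit LinearMap.id ∘ₗ ρ = LinearMap.id)
    -- the Yetter-Drinfel'd condition:
    -- Σ x₁ v₍₋₁₎ ⊗ x₂ • v₍₀₎ = Σ (x₁•v)₍₋₁₎ x₂ ⊗ (x₁•v)₍₀₎
    (hYD : TensorProduct.map (LinearMap.mul' k H) (act2 k H V) ∘ₗ
        (TensorProduct.tensorTensorTensorComm k H H H V).toLinearMap ∘ₗ
        TensorProduct.map Coalgebra.comul ρ
      = TensorProduct.map
            ((LinearMap.mul' k H) ∘ₗ (TensorProduct.comm k H H).toLinearMap)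
            LinearMap.id ∘ₗ
          (TensorProduct.assoc k H H V).symm.toLinearMap ∘ₗ
          TensorProduct.map LinearMap.id ρ ∘ₗ
          TensorProduct.map LinearMap.id (act2 k H V) ∘ₗ
          (TensorProduct.assoc k H H V).toLinearMap ∘ₗ
          TensorProduct.map (TensorProduct.comm k H H).toLinearMap LinearMap.id ∘ₗ
          TensorProduct.map Coalgebra.comul LinearMap.id)
    (α : V →ₗ[k] V)
    (hαmod : ∀ (x : H) (v : V), α (x • v) = x • α v)
    (hαcom : ρ ∘ₗ α = TensorProduct.map LinearMap.id α ∘ₗ ρ) :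
    (TensorProduct.map α α ∘ₗ ydB ρ = ydB ρ ∘ₗ TensorProduct.map α α) ∧
    (leftTwist α (ydB ρ) ∘ₗ TensorProduct.map (ydB ρ) α ∘ₗ leftTwist α (ydB ρ)
      = TensorProduct.map (ydB ρ) α ∘ₗ leftTwist α (ydB ρ) ∘ₗ
          TensorProduct.map (ydB ρ) α) := by
  have hρα : ∀ x : V, ρ (α x) = TensorProduct.map LinearMap.id α (ρ x) :=
    fun x => LinearMap.congr_fun hαcom x
  have hco : ∀ x : V, TensorProduct.map LinearMap.id ρ (ρ x)
      = (TensorProduct.assoc k H H V)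
          (TensorProduct.map Coalgebra.comul LinearMap.id (ρ x)) :=
    fun x => LinearMap.congr_fun hcoassoc x
  constructor
  · apply TensorProduct.ext'
    intro a b
    have key : ∀ s : H ⊗[k] V,
        TensorProduct.map α α (Gm k H V (s ⊗ₜ[k] b))
          = Gm k H V ((TensorProduct.map LinearMap.id α s) ⊗ₜ[k] α b) := by
      intro s
      induction s using TensorProduct.induction_on with
      | zero => simp [zero_tmul]
      | tmul h p => simp [Gm_tmul, hαmod]
      | add x y hx hy => simp [add_tmul, map_add, hx, hy]
    simp only [LinearMap.comp_apply, TensorProduct.map_tmul, ydB_tmul, key, hρα]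
  · apply TensorProduct.ext_threefold
    intro u v w
    simp only [LinearMap.comp_apply]
    -- ===== LEFT SIDE =====
    have stepA : leftTwist α (ydB ρ) ((u ⊗ₜ[k] v) ⊗ₜ[k] w)
        = (TensorProduct.assoc k V V V).symm (α u ⊗ₜ[k] Gm k H V (ρ v ⊗ₜ[k] w)) := by
      rw [leftTwist_tmul, ydB_tmul]
    have stepB : ∀ q : V ⊗[k] V,
        TensorProduct.map (ydB ρ) α ((TensorProduct.assoc k V V V).symm (α u ⊗ₜ[k] q))
          = TensorProduct.map
              (TensorProduct.curry (Gm k H V) (TensorProduct.map LinearMap.id α (ρ u))) α q := by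
      intro q
      induction q using TensorProduct.induction_on with
      | zero => simp
      | tmul a b =>
        simp [assoc_symm_tmul, ydB_tmul, hρα, TensorProduct.curry_apply]
      | add x y hx hy => simp [tmul_add, map_add, hx, hy]
    have stepC : ∀ (t s : H ⊗[k] V),
        leftTwist α (ydB ρ)
            (TensorProduct.map (TensorProduct.curry (Gm k H V) t) α (Gm k H V (s ⊗ₜ[k] w)))
          = PhiL k H V α w ((TensorProduct.map LinearMap.id ρ t) ⊗ₜ[k] s) := by
      intro t s
      induction s using TensorProduct.induction_on with
      | zero => simp
      | tmul h p =>
        rw [Gm_tmul]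
        induction t using TensorProduct.induction_on with
        | zero => simp
        | tmul x₁ x =>
          have inner : ∀ r : H ⊗[k] V,
              (TensorProduct.assoc k V V V).symm
                  (α (x₁ • h • w) ⊗ₜ[k] Gm k H V (r ⊗ₜ[k] α p))
                = PhiL k H V α w ((x₁ ⊗ₜ[k] r) ⊗ₜ[k] (h ⊗ₜ[k] p)) := by
            intro r
            induction r using TensorProduct.induction_on with
            | zero => simp
            | tmul g x₀ => simp [Gm_tmul, PhiL_tmul, assoc_symm_tmul]
            | add r1 r2 h1 h2 => simp [tmul_add, add_tmul, map_add, h1, h2]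
          rw [TensorProduct.map_tmul, TensorProduct.curry_apply, Gm_tmul,
            leftTwist_tmul, ydB_tmul, inner (ρ x)]
          simp
        | add t1 t2 h1 h2 =>
          simp only [map_add, TensorProduct.map_tmul, LinearMap.add_apply,
            TensorProduct.add_tmul] at h1 h2 ⊢
          rw [h1, h2]
      | add s1 s2 h1 h2 => simp [add_tmul, map_add, tmul_add, h1, h2]
    have mapmap : ∀ t : H ⊗[k] V,
        TensorProduct.map LinearMap.id ρ (TensorProduct.map LinearMap.id α t)
          = TensorProduct.map LinearMap.id (TensorProduct.map LinearMap.id α)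
              (TensorProduct.map LinearMap.id ρ t) := by
      intro t
      induction t using TensorProduct.induction_on with
      | zero => simp
      | tmul x c => simp [hρα]
      | add a b ha hb => simp [map_add, ha, hb]
    have innerL2 : ∀ (x₁ x₂ : H) (c : V) (s : H ⊗[k] V),
        PhiL k H V α w ((x₁ ⊗ₜ[k] (x₂ ⊗ₜ[k] α c)) ⊗ₜ[k] s)
          = PsiM k H V (α w) α
              (TensorProduct.map (LinearMap.mul' k H) (act2 k H V)
                (TensorProduct.tensorTensorTensorComm k H H H V ((x₁ ⊗ₜ[k] x₂) ⊗ₜ[k] s)))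
              ⊗ₜ[k] α c := by
      intro x₁ x₂ c s
      induction s using TensorProduct.induction_on with
      | zero => simp
      | tmul h p =>
        simp [PhiL_tmul, PsiM_tmul, act2_tmul, tensorTensorTensorComm_tmul,
          LinearMap.mul'_apply, hαmod, mul_smul]
      | add s1 s2 h1 h2 => simp [tmul_add, add_tmul, map_add, h1, h2]
    have innerL : ∀ (d : H ⊗[k] H) (c : V),
        PhiL k H V α w
            ((TensorProduct.map LinearMap.id (TensorProduct.map LinearMap.id α)
                ((TensorProduct.assoc k H H V) (d ⊗ₜ[k] c))) ⊗ₜ[k] ρ v)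
          = PsiM k H V (α w) α
              (TensorProduct.map (LinearMap.mul' k H) (act2 k H V)
                (TensorProduct.tensorTensorTensorComm k H H H V (d ⊗ₜ[k] ρ v)))
              ⊗ₜ[k] α c := by
      intro d c
      induction d using TensorProduct.induction_on with
      | zero => simp
      | tmul x₁ x₂ =>
        simpa using innerL2 x₁ x₂ c (ρ v)
      | add d1 d2 h1 h2 =>
        simp only [add_tmul, map_add, LinearEquiv.map_add, h1, h2]
    have claimL : ∀ yy : H ⊗[k] V,
        PhiL k H V α w
            ((TensorProduct.map LinearMap.id (TensorProduct.map LinearMap.id α)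
                ((TensorProduct.assoc k H H V)
                  (TensorProduct.map Coalgebra.comul LinearMap.id yy))) ⊗ₜ[k] ρ v)
          = TensorProduct.map
              ((PsiM k H V (α w) α) ∘ₗ
                (TensorProduct.map (LinearMap.mul' k H) (act2 k H V) ∘ₗ
                  (TensorProduct.tensorTensorTensorComm k H H H V).toLinearMap ∘ₗ
                  TensorProduct.map Coalgebra.comul ρ) ∘ₗ insV k H V v) α yy := by
      intro yy
      induction yy using TensorProduct.induction_on with
      | zero => simp
      | tmul x c =>
        simp only [TensorProduct.map_tmul, LinearMap.id_coe, id_eq,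
          LinearMap.comp_apply, insV_apply, LinearEquiv.coe_coe]
        exact innerL (Coalgebra.comul x) c
      | add a b ha hb => simp [map_add, add_tmul, ha, hb]
    -- ===== RIGHT SIDE =====
    have stepA' : TensorProduct.map (ydB ρ) α ((u ⊗ₜ[k] v) ⊗ₜ[k] w)
        = Gm k H V (ρ u ⊗ₜ[k] v) ⊗ₜ[k] α w := by
      rw [TensorProduct.map_tmul, ydB_tmul]
    have stepB' : ∀ t : H ⊗[k] V,
        leftTwist α (ydB ρ) (Gm k H V (t ⊗ₜ[k] v) ⊗ₜ[k] α w)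
          = PhiR k H V α v w (TensorProduct.map LinearMap.id ρ t) := by
      intro t
      induction t using TensorProduct.induction_on with
      | zero => simp
      | tmul g x =>
        have inner : ∀ r : H ⊗[k] V,
            (TensorProduct.assoc k V V V).symm (α (g • v) ⊗ₜ[k] Gm k H V (r ⊗ₜ[k] α w))
              = PhiR k H V α v w (g ⊗ₜ[k] r) := by
          intro r
          induction r using TensorProduct.induction_on with
          | zero => simp
          | tmul e c => simp [Gm_tmul, PhiR_tmul, assoc_symm_tmul]
          | add r1 r2 h1 h2 => simp [tmul_add, add_tmul, map_add, h1, h2]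
        rw [Gm_tmul, leftTwist_tmul, ydB_tmul, inner (ρ x)]
        simp
      | add t1 t2 h1 h2 => simp [add_tmul, map_add, h1, h2]
    have innerR2 : ∀ (x₂ : H) (c : V) (r : H ⊗[k] V),
        Gm k H V ((TensorProduct.map LinearMap.id α r) ⊗ₜ[k] (x₂ • α w)) ⊗ₜ[k] α c
          = PsiM k H V (α w) α
              (TensorProduct.map
                  ((LinearMap.mul' k H) ∘ₗ (TensorProduct.comm k H H).toLinearMap)
                  LinearMap.id
                ((TensorProduct.assoc k H H V).symm (x₂ ⊗ₜ[k] r))) ⊗ₜ[k] α c := by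
      intro x₂ c r
      induction r using TensorProduct.induction_on with
      | zero => simp
      | tmul n m =>
        simp [Gm_tmul, PsiM_tmul, assoc_symm_tmul, LinearMap.mul'_apply, mul_smul]
      | add r1 r2 h1 h2 => simp [tmul_add, add_tmul, map_add, h1, h2]
    have innerR : ∀ (d : H ⊗[k] H) (c : V),
        TensorProduct.map (ydB ρ) α
            (PhiR k H V α v w ((TensorProduct.assoc k H H V) (d ⊗ₜ[k] c)))
          = PsiM k H V (α w) α
              ((TensorProduct.map
                  ((LinearMap.mul' k H) ∘ₗ (TensorProduct.comm k H H).toLinearMap)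
                  LinearMap.id ∘ₗ
                (TensorProduct.assoc k H H V).symm.toLinearMap ∘ₗ
                TensorProduct.map LinearMap.id ρ ∘ₗ
                TensorProduct.map LinearMap.id (act2 k H V) ∘ₗ
                (TensorProduct.assoc k H H V).toLinearMap ∘ₗ
                TensorProduct.map (TensorProduct.comm k H H).toLinearMap LinearMap.id)
                (d ⊗ₜ[k] v)) ⊗ₜ[k] α c := by
      intro d c
      induction d using TensorProduct.induction_on with
      | zero => simp
      | tmul x₁ x₂ =>
        have lhs1 : TensorProduct.map (ydB ρ) α
            (PhiR k H V α v w ((TensorProduct.assoc k H H V) ((x₁ ⊗ₜ[k] x₂) ⊗ₜ[k] c)))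
            = Gm k H V ((TensorProduct.map LinearMap.id α (ρ (x₁ • v))) ⊗ₜ[k] (x₂ • α w))
              ⊗ₜ[k] α c := by
          rw [assoc_tmul, PhiR_tmul, TensorProduct.map_tmul, ydB_tmul, hρα]
        rw [lhs1, innerR2 x₂ c (ρ (x₁ • v))]
        simp [act2_tmul, comm_tmul]
      | add d1 d2 h1 h2 =>
        simp only [add_tmul, map_add, LinearEquiv.map_add, h1, h2]
    have claimR : ∀ yy : H ⊗[k] V,
        TensorProduct.map (ydB ρ) α
            (PhiR k H V α v w
              ((TensorProduct.assoc k H H V)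
                (TensorProduct.map Coalgebra.comul LinearMap.id yy)))
          = TensorProduct.map
              ((PsiM k H V (α w) α) ∘ₗ
                (TensorProduct.map
                      ((LinearMap.mul' k H) ∘ₗ (TensorProduct.comm k H H).toLinearMap)
                      LinearMap.id ∘ₗ
                  (TensorProduct.assoc k H H V).symm.toLinearMap ∘ₗ
                  TensorProduct.map LinearMap.id ρ ∘ₗ
                  TensorProduct.map LinearMap.id (act2 k H V) ∘ₗ
                  (TensorProduct.assoc k H H V).toLinearMap ∘ₗ
                  TensorProduct.map (TensorProduct.comm k H H).toLinearMap LinearMap.id ∘ₗ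
                  TensorProduct.map Coalgebra.comul LinearMap.id) ∘ₗ insV k H V v) α yy := by
      intro yy
      induction yy using TensorProduct.induction_on with
      | zero => simp
      | tmul x c =>
        have := innerR (Coalgebra.comul x) c
        simp only [TensorProduct.map_tmul, LinearMap.id_coe, id_eq,
          LinearMap.comp_apply, insV_apply, LinearEquiv.coe_coe] at this ⊢
        exact this
      | add a b ha hb => simp [map_add, add_tmul, ha, hb]
    -- ===== ASSEMBLE =====
    calc leftTwist α (ydB ρ)
          (TensorProduct.map (ydB ρ) α (leftTwist α (ydB ρ) ((u ⊗ₜ[k] v) ⊗ₜ[k] w)))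
        = TensorProduct.map
            ((PsiM k H V (α w) α) ∘ₗ
              (TensorProduct.map (LinearMap.mul' k H) (act2 k H V) ∘ₗ
                (TensorProduct.tensorTensorTensorComm k H H H V).toLinearMap ∘ₗ
                TensorProduct.map Coalgebra.comul ρ) ∘ₗ insV k H V v) α (ρ u) := by
          rw [stepA, stepB, stepC, mapmap, hco u, claimL]
      _ = TensorProduct.map (ydB ρ) α
            (leftTwist α (ydB ρ) (TensorProduct.map (ydB ρ) α ((u ⊗ₜ[k] v) ⊗ₜ[k] w))) := by
          rw [hYD, stepA', stepB', hco u, claimR]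

end YD
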